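/- Let H be a group generated by a finite set S, with word metric d. If h ∈ H is a Morse element (its orbit map t ↦ h^t is a quasi-isometric embedding of ℤ into the Cayley graph such that every (Λ,K)-quasi-geodesic between points h^i, h^j stays within a constant M^{(Λ,K)} of the cyclic subgroup ⟨h⟩), then the cyclic subgroup ⟨h⟩ has finite index in the centralizer Z(h) of h in H. -/

import Mathlib

/-- the word metric on `H` with respect to a generating set `T`. -/
noncomputable def wordDist {H : Type*} [Group H] (T : Set H) (g h : H) : ℕ :=
  sInf {n : ℕ | ∃ l : List H, l.length = n ∧ (∀ a ∈ l, a ∈ T ∨ a⁻¹ ∈ T) ∧ g * l.prod = h}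

namespace WD
variable {H : Type*} [Group H] {T : Set H}

lemma wd_le {g k : H} (l : List H) (hl : ∀ a ∈ l, a ∈ T ∨ a⁻¹ ∈ T) (hp : g * l.prod = k) :
    wordDist T g k ≤ l.length :=
  Nat.sInf_le ⟨l, rfl, hl, hp⟩

lemma wd_exists (hgen : Subgroup.closure T = ⊤) (g k : H) :
    ∃ l : List H, l.length = wordDist T g k ∧ (∀ a ∈ l, a ∈ T ∨ a⁻¹ ∈ T) ∧ g * l.prod = k := by
  have hx : g⁻¹ * k ∈ Subgroup.closure T := hgen ▸ Subgroup.mem_top _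
  rw [← Subgroup.mem_toSubmonoid, Subgroup.closure_toSubmonoid] at hx
  obtain ⟨l, hl, hp⟩ := Submonoid.exists_list_of_mem_closure hx
  have : wordDist T g k ∈ {n : ℕ | ∃ l : List H, l.length = n ∧
      (∀ a ∈ l, a ∈ T ∨ a⁻¹ ∈ T) ∧ g * l.prod = k} := by
    apply Nat.sInf_mem
    refine ⟨l.length, l, rfl, ?_, by rw [hp]; group⟩
    intro a ha
    rcases hl a ha with h | h
    · exact Or.inl h
    · exact Or.inr h
  exact this

lemma wd_self (g : H) : wordDist T g g = 0 :=
  Nat.le_zero.mp (by simpa using wd_le (T := T) ([] : List H) (by simp) (by simp))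

lemma wd_left_inv (x g k : H) : wordDist T (x * g) (x * k) = wordDist T g k := by
  unfold wordDist
  congr 1
  ext n
  constructor
  · rintro ⟨l, h1, h2, h3⟩
    exact ⟨l, h1, h2, by rw [mul_assoc] at h3; exact mul_left_cancel h3⟩
  · rintro ⟨l, h1, h2, h3⟩
    exact ⟨l, h1, h2, by rw [mul_assoc, h3]⟩

lemma wd_symm (g k : H) : wordDist T g k = wordDist T k g := by
  unfold wordDist
  congr 1
  ext n
  constructor <;> rintro ⟨l, h1, h2, h3⟩ <;>
  · refine ⟨(l.map fun x => x⁻¹).reverse, by simpa using h1, ?_, ?_⟩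
    · intro a ha
      simp only [List.mem_reverse, List.mem_map] at ha
      obtain ⟨b, hb, rfl⟩ := ha
      rcases h2 b hb with h | h
      · exact Or.inr (by simpa using h)
      · exact Or.inl h
    · rw [← List.prod_inv_reverse, ← h3]
      group

lemma wd_triangle (hgen : Subgroup.closure T = ⊤) (g m k : H) :
    wordDist T g k ≤ wordDist T g m + wordDist T m k := by
  obtain ⟨l1, hl1, h1, hp1⟩ := wd_exists hgen g m
  obtain ⟨l2, hl2, h2, hp2⟩ := wd_exists hgen m k
  have := wd_le (T := T) (l1 ++ l2) (by
    intro a ha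
    rcases List.mem_append.mp ha with h | h
    exacts [h1 a h, h2 a h]) (by rw [List.prod_append, ← mul_assoc, hp1, hp2])
  simpa [hl1, hl2] using this

lemma wd_ball_finite (hT : T.Finite) (hgen : Subgroup.closure T = ⊤) (R : ℕ) :
    {g : H | wordDist T 1 g ≤ R}.Finite := by
  classical
  set U : Set H := T ∪ T⁻¹ with hU
  have hUfin : U.Finite := hT.union (Set.Finite.inv hT)
  haveI : Finite U := hUfin.to_subtype
  have hfin : {l : List U | l.length ≤ R}.Finite := List.finite_length_le U R
  have himg : ((fun l : List U => (l.map Subtype.val).prod) '' {l | l.length ≤ R}).Finite :=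
    hfin.image _
  apply himg.subset
  intro g hg
  obtain ⟨l, hl, hmem, hp⟩ := wd_exists hgen 1 g
  have hmemU : ∀ a ∈ l, a ∈ U := by
    intro a ha
    rcases hmem a ha with h | h
    · exact Or.inl h
    · exact Or.inr (by simpa using h)
  refine ⟨l.attach.map (fun a => ⟨a.1, hmemU a.1 a.2⟩), by simpa [hl] using hg, ?_⟩
  have heq : ((l.attach.map (fun a => (⟨a.1, hmemU a.1 a.2⟩ : U))).map Subtype.val) = l := by
    simp [List.map_map, Function.comp]
  show ((l.attach.map (fun a => (⟨a.1, hmemU a.1 a.2⟩ : U))).map Subtype.val).prod = g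
  rw [heq]
  simpa using hp

set_option maxHeartbeats 2000000 in
lemma key (hgen : Subgroup.closure T = ⊤)
    (h z : H) (A B : ℝ) (hA : 1 ≤ A) (hB : 0 ≤ B)
    (hqi_lo : ∀ s t : ℤ, A⁻¹ * |(s : ℝ) - (t : ℝ)| - B ≤ (wordDist T (h ^ s) (h ^ t) : ℝ))
    (hup1 : (wordDist T (1 : H) h : ℝ) ≤ A + B)
    (hcomm : ∀ k : ℤ, z * h ^ k = h ^ k * z)
    (hmin : ∀ m : ℤ, wordDist T 1 z ≤ wordDist T 1 (z * h ^ m))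
    (M Λ K : ℝ) (hΛ : Λ = 3 * A * (1 + B)) (hK : K = B + 1)
    (hM : ∀ (n : ℕ) (γ : ℕ → H),
        (∀ i ≤ n, ∀ j ≤ n,
          (wordDist T (γ i) (γ j) : ℝ) ≤ Λ * |(i : ℝ) - (j : ℝ)| + K ∧
          Λ⁻¹ * |(i : ℝ) - (j : ℝ)| - K ≤ (wordDist T (γ i) (γ j) : ℝ)) →
        (∃ s : ℤ, γ 0 = h ^ s) → (∃ t : ℤ, γ n = h ^ t) →
        ∀ i ≤ n, ∃ m : ℤ, (wordDist T (γ i) (h ^ m) : ℝ) ≤ M) :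
    (wordDist T 1 z : ℝ) ≤ M := by
  classical
  have hApos : (0:ℝ) < A := lt_of_lt_of_le one_pos hA
  have hΛ1 : (1:ℝ) ≤ Λ := by rw [hΛ]; nlinarith
  have hΛpos : (0:ℝ) < Λ := lt_of_lt_of_le one_pos hΛ1
  have hK0 : (0:ℝ) ≤ K := by rw [hK]; linarith
  set D : ℕ := wordDist T 1 z with hD
  obtain ⟨l, hl, hlmem, hlprod⟩ := wd_exists hgen 1 z
  rw [← hD] at hl
  have hlprod' : l.prod = z := by rwa [one_mul] at hlprod
  set p : ℕ → H := fun i => (l.take i).prod with hp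
  have hp0 : p 0 = 1 := by simp [hp]
  have hpD : p D = z := by simp [hp, ← hl, hlprod']
  -- distance between prefix points
  have pd : ∀ i j : ℕ, i ≤ j → j ≤ D → wordDist T (p i) (p j) ≤ j - i := by
    intro i j hij hjD
    have hsub : l.take j = l.take i ++ (l.drop i).take (j - i) := by
      rw [← List.take_add]
      congr 1
      omega
    have hlen : ((l.drop i).take (j - i)).length = j - i := by
      rw [List.length_take, List.length_drop, hl]
      omega
    have hkey : p i * ((l.drop i).take (j - i)).prod = p j := by
      simp only [hp]
      rw [hsub, List.prod_append]
    have := wd_le (T := T) ((l.drop i).take (j - i))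
      (fun a ha => hlmem a (List.mem_of_mem_drop (List.mem_of_mem_take ha))) hkey
    omega
  have pd1 : ∀ i : ℕ, wordDist T (1 : H) (p i) ≤ i := by
    intro i
    have hkey : (1 : H) * (l.take i).prod = p i := by simp only [hp, one_mul]
    have := wd_le (T := T) (l.take i) (fun a ha => hlmem a (List.mem_of_mem_take ha)) hkey
    have hlen : (l.take i).length ≤ i := by
      rw [List.length_take]; omega
    omega
  have pdz : ∀ j : ℕ, j ≤ D → wordDist T (p j) z ≤ D - j := by
    intro j hj
    have hkey : p j * (l.drop j).prod = z := by
      simp only [hp]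
      rw [← List.prod_append, List.take_append_drop, hlprod']
    have := wd_le (T := T) (l.drop j) (fun a ha => hlmem a (List.mem_of_mem_drop ha)) hkey
    have hlen : (l.drop j).length = D - j := by rw [List.length_drop, hl]
    omega
  have plow : ∀ i j : ℕ, i ≤ j → j ≤ D → j - i ≤ wordDist T (p i) (p j) := by
    intro i j hij hjD
    have h1 := pd1 i
    have h2 := pdz j hjD
    have h3 := wd_triangle hgen (1 : H) (p i) z
    have h4 := wd_triangle hgen (p i) (p j) z
    rw [← hD] at h3
    omega
  -- the far-away fact
  have dmin' : ∀ t m : ℤ, (D : ℝ) ≤ (wordDist T (z * h ^ t) (h ^ m) : ℝ) := by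
    intro t m
    have e1 : wordDist T (z * h ^ t) (h ^ m) = wordDist T 1 (z * h ^ (t - m)) := by
      calc wordDist T (z * h ^ t) (h ^ m)
          = wordDist T (h ^ t * z) (h ^ t * h ^ (m - t)) := by
            rw [← hcomm, ← zpow_add]
            congr 2
            ring
        _ = wordDist T z (h ^ (m - t)) := wd_left_inv _ _ _
        _ = wordDist T (h ^ (m - t)) z := wd_symm _ _
        _ = wordDist T (h ^ (m - t) * 1) (h ^ (m - t) * (h ^ (t - m) * z)) := by
            rw [mul_one, ← mul_assoc, ← zpow_add]
            norm_num
        _ = wordDist T 1 (h ^ (t - m) * z) := wd_left_inv _ _ _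
        _ = wordDist T 1 (z * h ^ (t - m)) := by rw [hcomm]
    rw [e1]
    exact_mod_cast hmin (t - m)
  -- middle invariance
  have dmid : ∀ s t : ℤ, wordDist T (z * h ^ s) (z * h ^ t) = wordDist T (h ^ s) (h ^ t) :=
    fun s t => wd_left_inv z _ _
  have triR : ∀ x y w : H, (wordDist T x w : ℝ) ≤ (wordDist T x y : ℝ) + (wordDist T y w : ℝ) := by
    intro x y w
    exact_mod_cast wd_triangle hgen x y w
  -- the parameter n
  set n : ℕ := ⌈A * (B + 3 * (D : ℝ))⌉₊ + 1 with hn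
  have hnA : A * (B + 3 * (D : ℝ)) + 1 ≤ (n : ℝ) := by
    have := Nat.le_ceil (A * (B + 3 * (D : ℝ)))
    push_cast [hn]
    linarith
  have hn1 : 1 ≤ n := by omega
  set N : ℕ := 2 * D + 2 * n with hN
  set γ : ℕ → H := fun i =>
    if i ≤ D then h ^ (-(n : ℤ)) * p i
    else if i ≤ D + 2 * n then z * h ^ ((i : ℤ) - D - n)
    else h ^ ((n : ℤ)) * p (N - i) with hγ
  have γeq1 : ∀ i, i ≤ D → γ i = h ^ (-(n : ℤ)) * p i := by
    intro i hi
    simp [hγ, hi]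
  have γeq2 : ∀ i, D ≤ i → i ≤ D + 2 * n → γ i = z * h ^ ((i : ℤ) - D - n) := by
    intro i hi hi2
    by_cases hiD : i ≤ D
    · have : i = D := le_antisymm hiD hi
      subst this
      rw [γeq1 D le_rfl, hpD, ← hcomm]
      congr 2
      omega
    · simp [hγ, hiD, hi2]
  have γeq3 : ∀ i, D + 2 * n ≤ i → i ≤ N → γ i = h ^ ((n : ℤ)) * p (N - i) := by
    intro i hi hi2
    by_cases hiD : i ≤ D + 2 * n
    · have : i = D + 2 * n := le_antisymm hiD hi
      subst this
      rw [γeq2 (D + 2 * n) (by omega) le_rfl]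
      have h1 : N - (D + 2 * n) = D := by omega
      rw [h1, hpD, ← hcomm]
      congr 2
      omega
    · have hiD' : ¬ i ≤ D := by omega
      simp [hγ, hiD, hiD']
  have γ0 : γ 0 = h ^ (-(n : ℤ)) := by rw [γeq1 0 (Nat.zero_le _), hp0, mul_one]
  have γN : γ N = h ^ ((n : ℤ)) := by
    rw [γeq3 N (by omega) le_rfl, Nat.sub_self, hp0, mul_one]
  have γmid : γ (D + n) = z := by
    rw [γeq2 (D + n) (by omega) (by omega)]
    have : ((D + n : ℕ) : ℤ) - D - n = 0 := by push_cast; ring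
    rw [this, zpow_zero, mul_one]
  -- cast versions of prefix bounds
  have pdR : ∀ i j : ℕ, i ≤ j → j ≤ D → (wordDist T (p i) (p j) : ℝ) ≤ (j : ℝ) - i := by
    intro i j hij hjD
    have := pd i j hij hjD
    have h2 : ((j - i : ℕ) : ℝ) = (j : ℝ) - i := by
      rw [Nat.cast_sub hij]
    calc (wordDist T (p i) (p j) : ℝ) ≤ ((j - i : ℕ) : ℝ) := by exact_mod_cast this
      _ = (j : ℝ) - i := h2
  have plowR : ∀ i j : ℕ, i ≤ j → j ≤ D → (j : ℝ) - i ≤ (wordDist T (p i) (p j) : ℝ) := by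
    intro i j hij hjD
    have := plow i j hij hjD
    calc (j : ℝ) - i = ((j - i : ℕ) : ℝ) := by rw [Nat.cast_sub hij]
      _ ≤ (wordDist T (p i) (p j) : ℝ) := by exact_mod_cast this
  have pd1R : ∀ i : ℕ, (wordDist T (1 : H) (p i) : ℝ) ≤ (i : ℝ) := by
    intro i; exact_mod_cast pd1 i
  -- step bound along middle
  have dstep : ∀ s : ℤ, (wordDist T (h ^ s) (h ^ (s + 1)) : ℝ) ≤ A + B := by
    intro s
    have e : wordDist T (h ^ s) (h ^ (s + 1)) = wordDist T (1 : H) h := by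
      calc wordDist T (h ^ s) (h ^ (s + 1))
          = wordDist T (h ^ s * 1) (h ^ s * h) := by rw [mul_one, zpow_add_one]
        _ = wordDist T (1 : H) h := wd_left_inv _ _ _
    rw [e]; exact hup1
  -- single step bound
  have step : ∀ i : ℕ, i + 1 ≤ N → (wordDist T (γ i) (γ (i + 1)) : ℝ) ≤ A + B := by
    intro i hiN
    by_cases h1 : i + 1 ≤ D
    · rw [γeq1 i (by omega), γeq1 (i + 1) h1, wd_left_inv]
      have := pdR i (i + 1) (by omega) h1
      push_cast at this ⊢
      linarith
    · by_cases h2 : i + 1 ≤ D + 2 * n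
      · rw [γeq2 i (by omega) (by omega), γeq2 (i + 1) (by omega) h2, wd_left_inv]
        have e : ((i + 1 : ℕ) : ℤ) - D - n = ((i : ℤ) - D - n) + 1 := by push_cast; ring
        rw [e]
        exact dstep _
      · rw [γeq3 i (by omega) (by omega), γeq3 (i + 1) (by omega) hiN, wd_left_inv, wd_symm]
        have := pdR (N - (i + 1)) (N - i) (by omega) (by omega)
        have e1 : ((N - i : ℕ) : ℝ) - ((N - (i + 1) : ℕ) : ℝ) = 1 := by
          rw [Nat.cast_sub (by omega), Nat.cast_sub (by omega)]
          push_cast; ring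
        rw [e1] at this
        linarith
  -- upper bound
  have upper : ∀ i j : ℕ, i ≤ j → j ≤ N →
      (wordDist T (γ i) (γ j) : ℝ) ≤ (A + B) * ((j : ℝ) - i) := by
    intro i j hij hjN
    induction j, hij using Nat.le_induction with
    | base => rw [wd_self]; simp
    | succ j hij ih =>
      have h1 := ih (by omega)
      have h2 := step j (by omega)
      have h3 := triR (γ i) (γ j) (γ (j + 1))
      push_cast at h1 h2 h3 ⊢
      nlinarith only [h1, h2, h3]
  -- helper to discharge lower-bound goals
  have glow : ∀ Δ dd : ℝ, Δ ≤ Λ * (dd + K) → Λ⁻¹ * Δ - K ≤ dd := by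
    intro Δ dd hle
    have h1 : Λ⁻¹ * Δ ≤ Λ⁻¹ * (Λ * (dd + K)) :=
      mul_le_mul_of_nonneg_left hle (inv_nonneg.mpr hΛpos.le)
    rw [inv_mul_cancel_left₀ hΛpos.ne'] at h1
    linarith
  have hD0 : (0:ℝ) ≤ (D:ℝ) := Nat.cast_nonneg _
  -- lower bound
  have lower : ∀ i j : ℕ, i ≤ j → j ≤ N →
      Λ⁻¹ * ((j : ℝ) - i) - K ≤ (wordDist T (γ i) (γ j) : ℝ) := by
    intro i j hij hjN
    have hijR : (i:ℝ) ≤ j := by exact_mod_cast hij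
    have hΔ0 : (0:ℝ) ≤ (j:ℝ) - i := by linarith
    set dd : ℝ := (wordDist T (γ i) (γ j) : ℝ) with hdd
    have hdd0 : (0:ℝ) ≤ dd := by rw [hdd]; exact Nat.cast_nonneg _
    rcases le_or_gt j D with hjD | hjD
    · -- both on left segment
      have e : dd = (wordDist T (p i) (p j) : ℝ) := by
        rw [hdd, γeq1 i (by omega), γeq1 j hjD, wd_left_inv]
      have h1 := plowR i j hij hjD
      rw [← e] at h1
      apply glow
      have h6 : dd + K ≤ Λ * (dd + K) := le_mul_of_one_le_left (by linarith only [hdd0, hK0]) hΛ1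
      linarith only [h1, hK0, h6]
    · rcases le_or_gt j (D + 2 * n) with hj2 | hj2
      · rcases le_or_gt D i with hiD | hiD
        · -- both on middle segment
          have e : dd = (wordDist T (h ^ ((i:ℤ) - D - n)) (h ^ ((j:ℤ) - D - n)) : ℝ) := by
            rw [hdd, γeq2 i hiD (by omega), γeq2 j (by omega) hj2, wd_left_inv]
          have h1 := hqi_lo ((i:ℤ) - D - n) ((j:ℤ) - D - n)
          have habs : |(((i:ℤ) - D - n : ℤ) : ℝ) - (((j:ℤ) - D - n : ℤ) : ℝ)| = (j:ℝ) - i := by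
            have h0 : (((i:ℤ) - D - n : ℤ) : ℝ) - (((j:ℤ) - D - n : ℤ) : ℝ) = -((j:ℝ) - i) := by
              push_cast; ring
            rw [h0, abs_neg, abs_of_nonneg hΔ0]
          rw [habs, ← e] at h1
          apply glow
          have h2 : (j:ℝ) - i ≤ A * (dd + B) := by
            have h3 : A⁻¹ * ((j:ℝ) - i) ≤ dd + B := by linarith
            calc (j:ℝ) - i = A * (A⁻¹ * ((j:ℝ) - i)) := by field_simp
              _ ≤ A * (dd + B) := mul_le_mul_of_nonneg_left h3 hApos.le
          rw [hΛ, hK]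
          nlinarith only [h2, hdd0, hA, hB, mul_nonneg hApos.le hdd0,
            mul_nonneg (mul_nonneg hApos.le hB) hdd0,
            mul_nonneg (mul_nonneg hApos.le hB) hB, mul_nonneg hApos.le hB]
        · -- i on left, j on middle
          have hγj := γeq2 j (by omega) hj2
          set t : ℤ := (j:ℤ) - D - n with ht
          have f1 : (wordDist T (γ i) (h ^ (-(n:ℤ))) : ℝ) ≤ (i:ℝ) := by
            have e : (wordDist T (γ i) (h ^ (-(n:ℤ))) : ℝ) = (wordDist T (1:H) (p i) : ℝ) := by
              rw [γeq1 i (by omega),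
                show wordDist T (h ^ (-(n:ℤ)) * p i) (h ^ (-(n:ℤ)))
                  = wordDist T (h ^ (-(n:ℤ)) * p i) (h ^ (-(n:ℤ)) * 1) by rw [mul_one],
                wd_left_inv, wd_symm]
            rw [e]; exact pd1R i
          have f2 : (D:ℝ) ≤ (wordDist T (γ j) (h ^ (-(n:ℤ))) : ℝ) := by
            rw [hγj]; exact dmin' t (-(n:ℤ))
          have f3 : (wordDist T (γ i) (z * h ^ (-(n:ℤ))) : ℝ) ≤ (D:ℝ) - i := by
            have e : (wordDist T (γ i) (z * h ^ (-(n:ℤ))) : ℝ)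
                = (wordDist T (p i) (p D) : ℝ) := by
              rw [γeq1 i (by omega), hcomm (-(n:ℤ)), ← hpD, wd_left_inv]
            rw [e]; exact pdR i D (by omega) le_rfl
          have f4 : A⁻¹ * ((t:ℝ) + n) - B ≤ (wordDist T (γ j) (z * h ^ (-(n:ℤ))) : ℝ) := by
            have e : (wordDist T (γ j) (z * h ^ (-(n:ℤ))) : ℝ)
                = (wordDist T (h ^ t) (h ^ (-(n:ℤ))) : ℝ) := by rw [hγj, dmid]
            have h1 := hqi_lo t (-(n:ℤ))
            have habs : |(t:ℝ) - ((-(n:ℤ) : ℤ):ℝ)| = (t:ℝ) + n := by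
              have h0 : (t:ℝ) - ((-(n:ℤ) : ℤ):ℝ) = (t:ℝ) + n := by push_cast; ring
              have h4 : (0:ℤ) ≤ t + n := by rw [ht]; omega
              have h4R : (0:ℝ) ≤ (t:ℝ) + n := by exact_mod_cast h4
              rw [h0, abs_of_nonneg h4R]
            rw [habs] at h1
            rw [e]; exact h1
          have esym : (wordDist T (γ j) (γ i) : ℝ) = dd := by rw [hdd, wd_symm]
          have tri1 : (D:ℝ) - i ≤ dd := by
            have e1 := triR (γ j) (γ i) (h ^ (-(n:ℤ)))
            rw [esym] at e1
            linarith
          have tri2 : A⁻¹ * ((t:ℝ) + n) - B - ((D:ℝ) - i) ≤ dd := by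
            have e1 := triR (γ j) (γ i) (z * h ^ (-(n:ℤ)))
            rw [esym] at e1
            linarith
          have hΔ : (j:ℝ) - i = ((D:ℝ) - i) + ((t:ℝ) + n) := by
            simp only [ht]; push_cast; ring
          have hx0 : (0:ℝ) ≤ (D:ℝ) - i := by
            have : (i:ℝ) ≤ D := by exact_mod_cast (by omega : i ≤ D)
            linarith
          have hy : (t:ℝ) + n ≤ A * (dd + B + ((D:ℝ) - i)) := by
            have h3 : A⁻¹ * ((t:ℝ) + n) ≤ dd + B + ((D:ℝ) - i) := by linarith
            calc (t:ℝ) + n = A * (A⁻¹ * ((t:ℝ) + n)) := by field_simp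
              _ ≤ _ := mul_le_mul_of_nonneg_left h3 hApos.le
          apply glow
          rw [hΛ, hK, hΔ]
          nlinarith only [tri1, hy, hdd0, hx0, hA, hB, mul_nonneg hApos.le hdd0,
            mul_nonneg (mul_nonneg hApos.le hB) hdd0, mul_nonneg (mul_nonneg hApos.le hB) hB,
            mul_nonneg (sub_nonneg.mpr hA) hdd0, mul_nonneg hApos.le hB,
            mul_nonneg hApos.le (sub_nonneg.mpr tri1)]
      · rcases le_or_gt i D with hiD | hiD
        · -- i on left, j on right
          have f1 : (wordDist T (γ i) (h ^ (-(n:ℤ))) : ℝ) ≤ (i:ℝ) := by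
            have e : (wordDist T (γ i) (h ^ (-(n:ℤ))) : ℝ) = (wordDist T (1:H) (p i) : ℝ) := by
              rw [γeq1 i hiD,
                show wordDist T (h ^ (-(n:ℤ)) * p i) (h ^ (-(n:ℤ)))
                  = wordDist T (h ^ (-(n:ℤ)) * p i) (h ^ (-(n:ℤ)) * 1) by rw [mul_one],
                wd_left_inv, wd_symm]
            rw [e]; exact pd1R i
          have f2 : (wordDist T (γ j) (h ^ ((n:ℤ))) : ℝ) ≤ (N:ℝ) - j := by
            have e : (wordDist T (γ j) (h ^ ((n:ℤ))) : ℝ)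
                = (wordDist T (1:H) (p (N - j)) : ℝ) := by
              rw [γeq3 j (by omega) hjN,
                show wordDist T (h ^ ((n:ℤ)) * p (N - j)) (h ^ ((n:ℤ)))
                  = wordDist T (h ^ ((n:ℤ)) * p (N - j)) (h ^ ((n:ℤ)) * 1) by rw [mul_one],
                wd_left_inv, wd_symm]
            rw [e]
            calc (wordDist T (1:H) (p (N - j)) : ℝ) ≤ ((N - j : ℕ) : ℝ) := pd1R (N - j)
              _ = (N:ℝ) - j := by rw [Nat.cast_sub hjN]
          have f3 : A⁻¹ * (2 * (n:ℝ)) - B ≤ (wordDist T (h ^ (-(n:ℤ))) (h ^ ((n:ℤ))) : ℝ) := by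
            have h1 := hqi_lo (-(n:ℤ)) ((n:ℤ))
            have habs : |((-(n:ℤ) : ℤ):ℝ) - (((n:ℤ) : ℤ):ℝ)| = 2 * (n:ℝ) := by
              have h0 : ((-(n:ℤ) : ℤ):ℝ) - (((n:ℤ) : ℤ):ℝ) = -(2 * (n:ℝ)) := by push_cast; ring
              rw [h0, abs_neg, abs_of_nonneg (by positivity)]
            rw [habs] at h1
            exact h1
          have tri : (wordDist T (h ^ (-(n:ℤ))) (h ^ ((n:ℤ))) : ℝ) ≤ (i:ℝ) + dd + ((N:ℝ) - j) := by
            have e1 := triR (h ^ (-(n:ℤ))) (γ i) (h ^ ((n:ℤ)))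
            have e2 := triR (γ i) (γ j) (h ^ ((n:ℤ)))
            have es : (wordDist T (h ^ (-(n:ℤ))) (γ i) : ℝ)
                = (wordDist T (γ i) (h ^ (-(n:ℤ))) : ℝ) := by rw [wd_symm]
            rw [es] at e1
            rw [← hdd] at e2
            linarith
          have h2n : 2 * (n:ℝ) ≤ A * (B + (i:ℝ) + dd + ((N:ℝ) - j)) := by
            have h3 : A⁻¹ * (2 * (n:ℝ)) ≤ B + (i:ℝ) + dd + ((N:ℝ) - j) := by linarith
            calc 2 * (n:ℝ) = A * (A⁻¹ * (2 * (n:ℝ))) := by field_simp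
              _ ≤ _ := mul_le_mul_of_nonneg_left h3 hApos.le
          have hiDR : (i:ℝ) ≤ D := by exact_mod_cast hiD
          have hNjD : (N:ℝ) - j ≤ D := by
            have h4 : N ≤ D + j := by omega
            have h4R : (N:ℝ) ≤ (D:ℝ) + j := by exact_mod_cast h4
            linarith only [h4R]
          have hjNR : (j:ℝ) ≤ N := by exact_mod_cast hjN
          have h5 : (N:ℝ) = 2 * D + 2 * n := by rw [hN]; push_cast; ring
          apply glow
          rw [hΛ, hK]
          nlinarith only [hnA, h2n, hdd0, hA, hB, hD0, hiDR, hNjD, hjNR, h5,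
            show (0:ℝ) ≤ (i:ℝ) from Nat.cast_nonneg i,
            mul_nonneg hApos.le (sub_nonneg.mpr hiDR),
            mul_nonneg hApos.le (sub_nonneg.mpr hNjD),
            mul_nonneg (sub_nonneg.mpr hA) hD0, mul_nonneg (sub_nonneg.mpr hA) hdd0,
            mul_nonneg (mul_nonneg hApos.le hB) hdd0, mul_nonneg (mul_nonneg hApos.le hB) hB,
            mul_nonneg hApos.le hB, mul_nonneg hApos.le hD0, mul_nonneg hApos.le hdd0]
        · rcases le_or_gt i (D + 2 * n) with hi2 | hi2
          · -- i on middle, j on right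
            have hγi := γeq2 i (by omega) hi2
            set s : ℤ := (i:ℤ) - D - n with hs
            have f1 : (wordDist T (γ j) (h ^ ((n:ℤ))) : ℝ) ≤ (N:ℝ) - j := by
              have e : (wordDist T (γ j) (h ^ ((n:ℤ))) : ℝ)
                  = (wordDist T (1:H) (p (N - j)) : ℝ) := by
                rw [γeq3 j (by omega) hjN,
                  show wordDist T (h ^ ((n:ℤ)) * p (N - j)) (h ^ ((n:ℤ)))
                    = wordDist T (h ^ ((n:ℤ)) * p (N - j)) (h ^ ((n:ℤ)) * 1) by rw [mul_one],
                  wd_left_inv, wd_symm]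
              rw [e]
              calc (wordDist T (1:H) (p (N - j)) : ℝ) ≤ ((N - j : ℕ) : ℝ) := pd1R (N - j)
                _ = (N:ℝ) - j := by rw [Nat.cast_sub hjN]
            have f2 : (D:ℝ) ≤ (wordDist T (γ i) (h ^ ((n:ℤ))) : ℝ) := by
              rw [hγi]; exact dmin' s ((n:ℤ))
            have f3 : (wordDist T (γ j) (z * h ^ ((n:ℤ))) : ℝ) ≤ (D:ℝ) - ((N:ℝ) - j) := by
              have e : (wordDist T (γ j) (z * h ^ ((n:ℤ))) : ℝ)
                  = (wordDist T (p (N - j)) (p D) : ℝ) := by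
                rw [γeq3 j (by omega) hjN, hcomm ((n:ℤ)), ← hpD, wd_left_inv]
              rw [e]
              calc (wordDist T (p (N - j)) (p D) : ℝ) ≤ (D:ℝ) - ((N - j : ℕ) : ℝ) :=
                    pdR (N - j) D (by omega) le_rfl
                _ = (D:ℝ) - ((N:ℝ) - j) := by rw [Nat.cast_sub hjN]
            have f4 : A⁻¹ * ((n:ℝ) - s) - B ≤ (wordDist T (γ i) (z * h ^ ((n:ℤ))) : ℝ) := by
              have e : (wordDist T (γ i) (z * h ^ ((n:ℤ))) : ℝ)
                  = (wordDist T (h ^ s) (h ^ ((n:ℤ))) : ℝ) := by rw [hγi, dmid]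
              have h1 := hqi_lo s ((n:ℤ))
              have habs : |(s:ℝ) - (((n:ℤ) : ℤ):ℝ)| = (n:ℝ) - s := by
                have hsn : (0:ℤ) ≤ (n:ℤ) - s := by rw [hs]; omega
                have h0 : (s:ℝ) - (((n:ℤ) : ℤ):ℝ) = -((n:ℝ) - s) := by push_cast; ring
                have h4R : (0:ℝ) ≤ (n:ℝ) - (s:ℝ) := by exact_mod_cast hsn
                rw [h0, abs_neg, abs_of_nonneg h4R]
              rw [habs] at h1
              rw [e]; exact h1
            have esym : (wordDist T (γ j) (γ i) : ℝ) = dd := by rw [hdd, wd_symm]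
            have tri1 : (D:ℝ) - ((N:ℝ) - j) ≤ dd := by
              have e1 := triR (γ i) (γ j) (h ^ ((n:ℤ)))
              rw [← hdd] at e1
              linarith
            have tri2 : A⁻¹ * ((n:ℝ) - s) - B - ((D:ℝ) - ((N:ℝ) - j)) ≤ dd := by
              have e1 := triR (γ i) (γ j) (z * h ^ ((n:ℤ)))
              rw [← hdd] at e1
              linarith
            have h5 : (N:ℝ) = 2 * D + 2 * n := by rw [hN]; push_cast; ring
            have hΔ : (j:ℝ) - i = ((D:ℝ) - ((N:ℝ) - j)) + ((n:ℝ) - s) := by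
              simp only [hs]; push_cast; rw [h5]; push_cast; ring
            have hx0 : (0:ℝ) ≤ (D:ℝ) - ((N:ℝ) - j) := by
              have : D + 2 * n ≤ j := by omega
              have h4 : ((D + 2 * n : ℕ):ℝ) ≤ j := by exact_mod_cast this
              push_cast at h4
              linarith
            have hy : (n:ℝ) - s ≤ A * (dd + B + ((D:ℝ) - ((N:ℝ) - j))) := by
              have h3 : A⁻¹ * ((n:ℝ) - s) ≤ dd + B + ((D:ℝ) - ((N:ℝ) - j)) := by linarith
              calc (n:ℝ) - s = A * (A⁻¹ * ((n:ℝ) - s)) := by field_simp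
                _ ≤ _ := mul_le_mul_of_nonneg_left h3 hApos.le
            apply glow
            rw [hΛ, hK, hΔ]
            nlinarith only [tri1, hy, hdd0, hx0, hA, hB, mul_nonneg hApos.le hdd0,
              mul_nonneg (mul_nonneg hApos.le hB) hdd0, mul_nonneg (mul_nonneg hApos.le hB) hB,
              mul_nonneg (sub_nonneg.mpr hA) hdd0, mul_nonneg hApos.le hB,
              mul_nonneg hApos.le (sub_nonneg.mpr tri1)]
          · -- both on right segment
            have e : dd = (wordDist T (p (N - j)) (p (N - i)) : ℝ) := by
              rw [hdd, γeq3 i (by omega) (by omega), γeq3 j (by omega) hjN, wd_left_inv,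
                wd_symm]
            have h1 := plowR (N - j) (N - i) (by omega) (by omega)
            rw [← e] at h1
            have h2 : ((N - i : ℕ):ℝ) - ((N - j : ℕ):ℝ) = (j:ℝ) - i := by
              rw [Nat.cast_sub (by omega), Nat.cast_sub hjN]
              ring
            rw [h2] at h1
            apply glow
            have h6 : dd + K ≤ Λ * (dd + K) :=
              le_mul_of_one_le_left (by linarith only [hdd0, hK0]) hΛ1
            linarith only [h1, hK0, h6]
  -- assemble the quasigeodesic hypothesis
  have hAB1 : (1:ℝ) ≤ A + B := by linarith
  have hQG : ∀ i ≤ N, ∀ j ≤ N,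
      (wordDist T (γ i) (γ j) : ℝ) ≤ Λ * |(i : ℝ) - (j : ℝ)| + K ∧
      Λ⁻¹ * |(i : ℝ) - (j : ℝ)| - K ≤ (wordDist T (γ i) (γ j) : ℝ) := by
    intro i hi j hj
    rcases le_total i j with hij | hij
    · have hu := upper i j hij hj
      have hlo := lower i j hij hj
      have hijR : (i:ℝ) ≤ j := by exact_mod_cast hij
      have habs : |(i:ℝ) - j| = (j:ℝ) - i := by
        rw [abs_sub_comm, abs_of_nonneg (by linarith)]
      rw [habs]
      refine ⟨?_, hlo⟩
      have hABΛ : A + B ≤ Λ := by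
        rw [hΛ]
        nlinarith only [hA, hB, mul_nonneg hApos.le hB, mul_nonneg (sub_nonneg.mpr hA) hB]
      have h7 : (A + B) * ((j:ℝ) - i) ≤ Λ * ((j:ℝ) - i) :=
        mul_le_mul_of_nonneg_right hABΛ (by linarith only [hijR])
      linarith only [hu, h7, hK0]
    · have hu := upper j i hij hi
      have hlo := lower j i hij hi
      have hijR : (j:ℝ) ≤ i := by exact_mod_cast hij
      have habs : |(i:ℝ) - j| = (i:ℝ) - j := abs_of_nonneg (by linarith)
      have es : (wordDist T (γ i) (γ j) : ℝ) = (wordDist T (γ j) (γ i) : ℝ) := by rw [wd_symm]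
      rw [habs, es]
      refine ⟨?_, hlo⟩
      have hABΛ : A + B ≤ Λ := by
        rw [hΛ]
        nlinarith only [hA, hB, mul_nonneg hApos.le hB, mul_nonneg (sub_nonneg.mpr hA) hB]
      have h7 : (A + B) * ((i:ℝ) - j) ≤ Λ * ((i:ℝ) - j) :=
        mul_le_mul_of_nonneg_right hABΛ (by linarith only [hijR])
      linarith only [hu, h7, hK0]
  obtain ⟨m, hm⟩ := hM N γ hQG ⟨-(n:ℤ), γ0⟩ ⟨(n:ℤ), γN⟩ (D + n) (by omega)
  rw [γmid] at hm
  have hfin := dmin' 0 m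
  rw [zpow_zero, mul_one] at hfin
  linarith

end WD

/-- If `h` is a Morse element of a finitely generated group `H` (its orbit map
`t ↦ h^t` is a quasi-isometric embedding of `ℤ` such that every
`(Λ,K)`-quasi-geodesic between points of `⟨h⟩` stays within a constant of `⟨h⟩`),
then `⟨h⟩` has finite index in the centralizer of `h`. -/
theorem morse_cyclic_finite_index_in_centralizer
    {H : Type*} [Group H] (S : Finset H)
    (hgen : Subgroup.closure (S : Set H) = ⊤) (h : H)
    (A B : ℝ) (hA : 1 ≤ A) (hB : 0 ≤ B)
    (hqi_up : ∀ s t : ℤ,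
      (wordDist (S : Set H) (h ^ s) (h ^ t) : ℝ) ≤ A * |(s : ℝ) - (t : ℝ)| + B)
    (hqi_lo : ∀ s t : ℤ,
      A⁻¹ * |(s : ℝ) - (t : ℝ)| - B ≤ (wordDist (S : Set H) (h ^ s) (h ^ t) : ℝ))
    (hmorse : ∀ Λ K : ℝ, 1 ≤ Λ → 0 ≤ K → ∃ M : ℝ,
      ∀ (n : ℕ) (γ : ℕ → H),
        (∀ i ≤ n, ∀ j ≤ n,
          (wordDist (S : Set H) (γ i) (γ j) : ℝ) ≤ Λ * |(i : ℝ) - (j : ℝ)| + K ∧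
          Λ⁻¹ * |(i : ℝ) - (j : ℝ)| - K ≤ (wordDist (S : Set H) (γ i) (γ j) : ℝ)) →
        (∃ s : ℤ, γ 0 = h ^ s) → (∃ t : ℤ, γ n = h ^ t) →
        ∀ i ≤ n, ∃ m : ℤ, (wordDist (S : Set H) (γ i) (h ^ m) : ℝ) ≤ M) :
    ((Subgroup.zpowers h).subgroupOf (Subgroup.centralizer {h})).FiniteIndex := by
  classical
  have hApos : (0:ℝ) < A := lt_of_lt_of_le one_pos hA
  have hup1 : (wordDist (S : Set H) (1 : H) h : ℝ) ≤ A + B := by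
    have h0 := hqi_up 0 1
    rw [zpow_zero, zpow_one] at h0
    norm_num at h0
    linarith
  set Λ : ℝ := 3 * A * (1 + B) with hΛ
  set K : ℝ := B + 1 with hK
  have hΛ1 : (1:ℝ) ≤ Λ := by
    rw [hΛ]; nlinarith only [hA, hB, mul_nonneg hApos.le hB]
  have hK0 : (0:ℝ) ≤ K := by rw [hK]; linarith
  obtain ⟨M, hM⟩ := hmorse Λ K hΛ1 hK0
  have key' : ∀ z : H, (∀ k : ℤ, z * h ^ k = h ^ k * z) →
      (∀ m : ℤ, wordDist (S : Set H) 1 z ≤ wordDist (S : Set H) 1 (z * h ^ m)) →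
      (wordDist (S : Set H) 1 z : ℝ) ≤ M :=
    fun z hc hm' => WD.key hgen h z A B hA hB hqi_lo hup1 hc hm' M Λ K hΛ hK hM
  set R : ℕ := ⌈max M 0⌉₊ with hR
  have hball : {g : H | wordDist (S : Set H) 1 g ≤ R}.Finite :=
    WD.wd_ball_finite S.finite_toSet hgen R
  have hhZ : h ∈ Subgroup.centralizer ({h} : Set H) := by
    rw [Subgroup.mem_centralizer_iff]
    intro g hg
    rw [Set.mem_singleton_iff] at hg
    rw [hg]
  haveI hfinQ : Finite
      ((Subgroup.centralizer ({h} : Set H)) ⧸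
        ((Subgroup.zpowers h).subgroupOf (Subgroup.centralizer ({h} : Set H)))) := by
    haveI := hball.to_subtype
    apply Finite.of_surjective
      (f := fun (g : {g : H // g ∈ {g : H | wordDist (S : Set H) 1 g ≤ R}}) =>
        if hg : (g : H) ∈ Subgroup.centralizer ({h} : Set H) then
          (QuotientGroup.mk (⟨g.1, hg⟩ : Subgroup.centralizer ({h} : Set H)) :
            (Subgroup.centralizer ({h} : Set H)) ⧸
              ((Subgroup.zpowers h).subgroupOf (Subgroup.centralizer ({h} : Set H))))
        else QuotientGroup.mk 1)
    intro q
    induction q using QuotientGroup.induction_on with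
    | H z =>
      -- pick a minimal length representative of the coset z⟨h⟩
      have hne : (Set.range fun m : ℤ => wordDist (S : Set H) 1 ((z : H) * h ^ m)).Nonempty :=
        ⟨_, ⟨0, rfl⟩⟩
      obtain ⟨m₀, hm₀⟩ := Nat.sInf_mem hne
      set z₀ : H := (z : H) * h ^ m₀ with hz₀
      have hzh : Commute (z : H) h := by
        have := z.2
        rw [Subgroup.mem_centralizer_iff] at this
        exact (this h (Set.mem_singleton h)).symm
      have hz₀h : Commute z₀ h := Commute.mul_left hzh ((Commute.refl h).zpow_left m₀)
      have hc : ∀ k : ℤ, z₀ * h ^ k = h ^ k * z₀ := fun k => (hz₀h.zpow_right k).eq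
      have hmin : ∀ m : ℤ, wordDist (S : Set H) 1 z₀ ≤ wordDist (S : Set H) 1 (z₀ * h ^ m) := by
        intro m
        have e : z₀ * h ^ m = (z : H) * h ^ (m₀ + m) := by
          rw [hz₀, mul_assoc, ← zpow_add]
        rw [e]
        calc wordDist (S : Set H) 1 z₀
            = sInf (Set.range fun m : ℤ => wordDist (S : Set H) 1 ((z : H) * h ^ m)) := by
              rw [hz₀]; exact hm₀
          _ ≤ _ := Nat.sInf_le ⟨m₀ + m, rfl⟩
      have hMz := key' z₀ hc hmin
      have hz₀R : wordDist (S : Set H) 1 z₀ ≤ R := by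
        have h1 : (wordDist (S : Set H) 1 z₀ : ℝ) ≤ ((R : ℕ) : ℝ) :=
          le_trans (le_trans hMz (le_max_left _ _)) (Nat.le_ceil _)
        exact_mod_cast h1
      have hz₀Z : z₀ ∈ Subgroup.centralizer ({h} : Set H) :=
        Subgroup.mul_mem _ z.2 (Subgroup.zpow_mem _ hhZ m₀)
      refine ⟨⟨z₀, hz₀R⟩, ?_⟩
      dsimp only
      rw [dif_pos hz₀Z, QuotientGroup.eq, Subgroup.mem_subgroupOf]
      apply Subgroup.mem_zpowers_iff.mpr
      refine ⟨-m₀, ?_⟩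
      show h ^ (-m₀) = ((⟨z₀, hz₀Z⟩ : Subgroup.centralizer ({h} : Set H))⁻¹ * z : H)
      have e2 : ((⟨z₀, hz₀Z⟩ : Subgroup.centralizer ({h} : Set H))⁻¹ * z : H) = z₀⁻¹ * z := rfl
      rw [e2, hz₀]
      group
  exact Subgroup.finiteIndex_of_finite_quotient
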